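/- Cycle-CTL* does not have the finite-model property: there exists a Cycle-CTL* state formula (namely A G ¬E^cycle ⊤) that is satisfiable in some Kripke structure but is not satisfiable in any Kripke structure with finitely many worlds. -/

import Mathlib

namespace CycleCTL

universe u v

/-- A Kripke structure over a set `AP` of atomic propositions. -/
structure Kripke (AP : Type) : Type (u + 1) where
  World : Type u
  init : World
  R : World → World → Prop
  label : World → Set AP
  serial : ∀ w, ∃ v, R w v

variable {AP : Type}

/-- An (infinite) path of a Kripke structure. -/
def IsPath (K : Kripke.{u} AP) (π : ℕ → K.World) : Prop :=
  ∀ i, K.R (π i) (π (i + 1))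

/-- A cycle: a path visiting its first world infinitely often. -/
def IsCycle (K : Kripke.{u} AP) (π : ℕ → K.World) : Prop :=
  IsPath K π ∧ ∀ i, ∃ j, i < j ∧ π j = π 0

mutual
  /-- State formulas of Cycle-CTL*. -/
  inductive StateForm (AP : Type) : Type where
    | atom : AP → StateForm AP
    | not  : StateForm AP → StateForm AP
    | and  : StateForm AP → StateForm AP → StateForm AP
    | or   : StateForm AP → StateForm AP → StateForm AP
    | E    : PathForm AP → StateForm AP
    | A    : PathForm AP → StateForm AP
    | Ec   : PathForm AP → StateForm AP
    | Ac   : PathForm AP → StateForm AP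
  /-- Path formulas of Cycle-CTL*. -/
  inductive PathForm (AP : Type) : Type where
    | state : StateForm AP → PathForm AP
    | not   : PathForm AP → PathForm AP
    | and   : PathForm AP → PathForm AP → PathForm AP
    | or    : PathForm AP → PathForm AP → PathForm AP
    | next  : PathForm AP → PathForm AP
    | untl  : PathForm AP → PathForm AP → PathForm AP
end

mutual
  /-- Satisfaction of a state formula at a world. -/
  def SatS (K : Kripke.{u} AP) : K.World → StateForm AP → Prop
    | w, .atom p => p ∈ K.label w
    | w, .not φ => ¬ SatS K w φ
    | w, .and φ₁ φ₂ => SatS K w φ₁ ∧ SatS K w φ₂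
    | w, .or φ₁ φ₂ => SatS K w φ₁ ∨ SatS K w φ₂
    | w, .E ψ => ∃ π, IsPath K π ∧ π 0 = w ∧ SatP K π 0 ψ
    | w, .A ψ => ∀ π, IsPath K π → π 0 = w → SatP K π 0 ψ
    | w, .Ec ψ => ∃ π, IsCycle K π ∧ π 0 = w ∧ SatP K π 0 ψ
    | w, .Ac ψ => ∀ π, IsCycle K π → π 0 = w → SatP K π 0 ψ
  /-- Satisfaction of a path formula on a path at a position. -/
  def SatP (K : Kripke.{u} AP) : (ℕ → K.World) → ℕ → PathForm AP → Prop
    | π, i, .state φ => SatS K (π i) φ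
    | π, i, .not ψ => ¬ SatP K π i ψ
    | π, i, .and ψ₁ ψ₂ => SatP K π i ψ₁ ∧ SatP K π i ψ₂
    | π, i, .or ψ₁ ψ₂ => SatP K π i ψ₁ ∨ SatP K π i ψ₂
    | π, i, .next ψ => SatP K π (i + 1) ψ
    | π, i, .untl ψ₁ ψ₂ => ∃ k, SatP K π (i + k) ψ₂ ∧ ∀ j < k, SatP K π (i + j) ψ₁
end

/-- `K ⊨ φ` : satisfaction at the initial world. -/
def Sat (K : Kripke.{u} AP) (φ : StateForm AP) : Prop := SatS K K.init φ

/-- `⊤` as a path formula, abbreviating `p ∨ ¬p`. -/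
def topP (p : AP) : PathForm AP := .or (.state (.atom p)) (.not (.state (.atom p)))

/-- `F ψ` abbreviates `⊤ U ψ`. -/
def FP (p : AP) (ψ : PathForm AP) : PathForm AP := .untl (topP p) ψ

/-- `G ψ` abbreviates `¬(⊤ U ¬ψ)`. -/
def GP (p : AP) (ψ : PathForm AP) : PathForm AP := .not (FP p (.not ψ))


lemma satP_topP (K : Kripke.{u} Unit) (π : ℕ → K.World) (i : ℕ) :
    SatP K π i (topP ()) := by
  show SatP K π i (.or _ _)
  simp only [SatP, topP]
  exact Classical.em _

/-- a path starting at the initial world -/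
noncomputable def initPath (K : Kripke.{u} AP) : ℕ → K.World :=
  fun n => (fun w => Classical.choose (K.serial w))^[n] K.init

lemma initPath_isPath (K : Kripke.{u} AP) : IsPath K (initPath K) := by
  intro i
  have : initPath K (i + 1) = Classical.choose (K.serial (initPath K i)) := by
    simp [initPath, Function.iterate_succ_apply']
  rw [this]
  exact Classical.choose_spec (K.serial (initPath K i))

lemma initPath_zero (K : Kripke.{u} AP) : initPath K 0 = K.init := rfl

lemma cycle_of_repeat (K : Kripke.{u} AP) (π : ℕ → K.World) (h : IsPath K π)
    (a b : ℕ) (hab : a < b) (heq : π a = π b) :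
    ∃ ρ, IsCycle K ρ ∧ ρ 0 = π a := by
  set d := b - a with hd
  have hd0 : 0 < d := by omega
  have hb : a + d = b := by omega
  refine ⟨fun i => π (a + i % d), ⟨?_, ?_⟩, by simp⟩
  · intro i
    have hstep : π (a + (i + 1) % d) = π (a + i % d + 1) := by
      have hmod : (i + 1) % d = (i % d + 1) % d := (Nat.mod_add_mod i d 1).symm
      have hlt : i % d < d := Nat.mod_lt i hd0
      rcases Nat.lt_or_ge (i % d + 1) d with hc | hc
      · rw [hmod, Nat.mod_eq_of_lt hc, ← Nat.add_assoc]
      · have hde : i % d + 1 = d := by omega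
        rw [hmod, hde, Nat.mod_self, Nat.add_zero, heq]
        congr 1
        omega
    show K.R (π (a + i % d)) (π (a + (i + 1) % d))
    rw [hstep]
    exact h (a + i % d)
  · intro i
    refine ⟨(i + 1) * d, ?_, ?_⟩
    · calc i < i + 1 := Nat.lt_succ_self i
        _ ≤ (i + 1) * d := Nat.le_mul_of_pos_right _ hd0
    · simp [Nat.mul_mod_left]

lemma no_sat_of_cycle_at_path (K : Kripke.{u} Unit) (hK : Sat K (.A (GP () (.state (.not (.Ec (topP ())))))))
    (π : ℕ → K.World) (hπ : IsPath K π) (h0 : π 0 = K.init)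
    (a : ℕ) (ρ : ℕ → K.World) (hρ : IsCycle K ρ) (hρ0 : ρ 0 = π a) : False := by
  have h1 : SatP K π 0 (GP () (.state (.not (.Ec (topP ()))))) := hK π hπ h0
  show False
  have h2 : ¬ ∃ k, SatP K π (0 + k) (.not (.state (.not (.Ec (topP ()))))) ∧
      ∀ j < k, SatP K π (0 + j) (topP ()) := by
    have : SatP K π 0 (.not (.untl (topP ()) (.not (.state (.not (.Ec (topP ()))))))) := h1
    simpa only [SatP] using this
  apply h2
  refine ⟨a, ?_, fun j _ => satP_topP K π _⟩
  show ¬ SatP K π (0 + a) (.state (.not (.Ec (topP ()))))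
  simp only [SatP, SatS, Nat.zero_add, not_not]
  exact ⟨ρ, hρ, hρ0, satP_topP K ρ 0⟩

/-- Cycle-CTL* lacks the finite-model property: the formula `A G ¬ E^cycle ⊤`
is satisfiable, but not satisfiable in any Kripke structure with finitely many worlds. -/
theorem stmt3 :
    ∃ φ : StateForm Unit,
      φ = .A (GP () (.state (.not (.Ec (topP ()))))) ∧
      (∃ K : Kripke.{0} Unit, Sat K φ) ∧
      (∀ K : Kripke.{u} Unit, Finite K.World → ¬ Sat K φ) := by
  refine ⟨_, rfl, ?_, ?_⟩
  · -- the natural numbers with successor: no cycles at all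
    refine ⟨⟨ℕ, 0, fun m n => n = m + 1, fun _ => ∅, fun w => ⟨w + 1, rfl⟩⟩, ?_⟩
    set K : Kripke.{0} Unit := ⟨ℕ, 0, fun m n => n = m + 1, fun _ => ∅, fun w => ⟨w + 1, rfl⟩⟩
    have nocyc : ∀ ρ : ℕ → ℕ, ¬ IsCycle K ρ := by
      rintro ρ ⟨hpath, hrep⟩
      have hlin : ∀ i, ρ i = ρ 0 + i := by
        intro i
        induction i with
        | zero => rfl
        | succ n ih => have : ρ (n + 1) = ρ n + 1 := hpath n; omega
      obtain ⟨j, hj, hje⟩ := hrep 0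
      rw [hlin j] at hje
      have : (ρ 0 : ℕ) + j = ρ 0 := hje
      omega
    intro π hπ h0
    show SatP K π 0 (.not (.untl (topP ()) (.not (.state (.not (.Ec (topP ())))))))
    simp only [SatP]
    rintro ⟨k, hk, -⟩
    have : SatS K (π (0 + k)) (.Ec (topP ())) := by
      have : ¬ SatP K π (0 + k) (.state (.not (.Ec (topP ())))) := hk
      simpa only [SatP, SatS, not_not] using this
    obtain ⟨ρ, hρ, -, -⟩ := this
    exact nocyc ρ hρ
  · -- every finite Kripke structure has a reachable cycle
    intro K hfin hsat
    have hπ := initPath_isPath K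
    obtain ⟨a, b, hne, heq⟩ := Finite.exists_ne_map_eq_of_infinite (initPath K)
    rcases Nat.lt_or_ge a b with hab | hab
    · obtain ⟨ρ, hρ, hρ0⟩ := cycle_of_repeat K (initPath K) hπ a b hab heq
      exact no_sat_of_cycle_at_path K hsat (initPath K) hπ (initPath_zero K) a ρ hρ hρ0
    · have hba : b < a := by omega
      obtain ⟨ρ, hρ, hρ0⟩ := cycle_of_repeat K (initPath K) hπ b a hba heq.symm
      exact no_sat_of_cycle_at_path K hsat (initPath K) hπ (initPath_zero K) b ρ hρ hρ0

end CycleCTL
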